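/- Let (G_i, Ŵ_i), i ∈ ℕ, be i.i.d. random pairs on a probability space with G_i ∈ {A, B}, P(G_i = A) = p_A ∈ (0,1), and such that, conditionally on G_i = G, the estimate Ŵ_i is Gaussian with mean μ_G − β_G and variance σ̂_G² (σ̂_G > 0). Fix α ∈ (0,1). For each n, let S_n ⊆ {1, …, n} be the set of indices of the ⌊αn⌋ largest values among Ŵ_1, …, Ŵ_n (ties broken by smallest index). Then the fraction of selected A-candidates among all A-candidates, #{i ∈ S_n : G_i = A} / max(1, #{i ≤ n : G_i = A}), converges in probability, as n → ∞, to the deterministic limit x^obl := 1 − Φ((θ − μ_A + β_A)/σ̂_A), where θ is the unique real number satisfying p_A·(1 − Φ((θ − μ_A + β_A)/σ̂_A)) + (1 − p_A)·(1 − Φ((θ − μ_B + β_B)/σ̂_B)) = α. -/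

import Mathlib

noncomputable def gpdf (t : ℝ) : ℝ := Real.exp (-t ^ 2 / 2) / Real.sqrt (2 * Real.pi)

noncomputable def gcdf (x : ℝ) : ℝ := ∫ t in Set.Iic x, gpdf t

noncomputable def gquant : ℝ → ℝ := Function.invFun gcdf

noncomputable def sHat (η σ : ℝ) : ℝ := Real.sqrt (η ^ 2 + σ ^ 2)

noncomputable def sTil (η σ : ℝ) : ℝ := η ^ 2 / sHat η σ

def Dset (pA α : ℝ) : Set ℝ :=
  {x | x ∈ Set.Ioo (0:ℝ) 1 ∧ (α - pA * x) / (1 - pA) ∈ Set.Ioo (0:ℝ) 1}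

noncomputable def Qfun (pA α μA μB sA sB x : ℝ) : ℝ :=
  (1 / α) * (pA * (μA * x + sA * gpdf (gquant (1 - x)))
    + (1 - pA) * (μB * ((α - pA * x) / (1 - pA))
      + sB * gpdf (gquant (1 - (α - pA * x) / (1 - pA)))))

noncomputable def clampTo (lo hi x : ℝ) : ℝ := min hi (max lo x)


open scoped Classical

/-- Rank (from the top, ties broken by smallest index) of candidate `i` among the
first `n` candidates according to the estimates `W · ω`. -/
noncomputable def rankIn {Ω : Type*} (W : ℕ → Ω → ℝ) (n i : ℕ) (ω : Ω) : ℕ :=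
  ((Finset.range n).filter (fun j => W i ω < W j ω ∨ (W j ω = W i ω ∧ j ≤ i))).card

/-- Fraction of selected `A`-candidates (those with `G i ω = true`) among all
`A`-candidates, when the `⌊α·n⌋` candidates with the largest estimates are selected. -/
noncomputable def selAFrac {Ω : Type*} (G : ℕ → Ω → Bool) (W : ℕ → Ω → ℝ)
    (α : ℝ) (n : ℕ) (ω : Ω) : ℝ :=
  (((Finset.range n).filter (fun i => G i ω = true ∧ rankIn W n i ω ≤ ⌊α * n⌋₊)).card : ℝ)
    / max 1 (((Finset.range n).filter (fun i => G i ω = true)).card : ℝ)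

section Aux
open MeasureTheory ProbabilityTheory Filter

lemma gpdf_pos (t : ℝ) : 0 < gpdf t := by unfold gpdf; positivity

lemma integrable_gpdf : Integrable gpdf := by
  have h := (integrable_exp_neg_mul_sq (by norm_num : (0:ℝ) < 1/2)).div_const
    (Real.sqrt (2 * Real.pi))
  refine h.congr (by filter_upwards with t; unfold gpdf; ring_nf)

lemma gcdf_add_Ioc {a b : ℝ} (h : a ≤ b) :
    gcdf b = gcdf a + ∫ t in Set.Ioc a b, gpdf t := by
  unfold gcdf
  rw [← setIntegral_union (Set.Iic_disjoint_Ioc le_rfl) measurableSet_Ioc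
    integrable_gpdf.integrableOn integrable_gpdf.integrableOn,
    Set.Iic_union_Ioc_eq_Iic h]

lemma gcdf_strictMono : StrictMono gcdf := by
  intro a b hab
  rw [gcdf_add_Ioc hab.le]
  have : 0 < ∫ t in Set.Ioc a b, gpdf t := by
    rw [← intervalIntegral.integral_of_le hab.le]
    exact intervalIntegral.intervalIntegral_pos_of_pos_on
      integrable_gpdf.intervalIntegrable (fun x _ => gpdf_pos x) hab
  linarith

lemma gcdf_continuous : Continuous gcdf := by
  have h : Continuous fun b => ∫ x in (0:ℝ)..b, gpdf x :=
    integrable_gpdf.continuous_primitive 0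
  have heq : ∀ b, gcdf b = gcdf 0 + ∫ x in (0:ℝ)..b, gpdf x := by
    intro b
    rcases le_or_gt 0 b with hb | hb
    · rw [intervalIntegral.integral_of_le hb, ← gcdf_add_Ioc hb]
    · rw [intervalIntegral.integral_symm, intervalIntegral.integral_of_le hb.le, eq_comm]
      have := gcdf_add_Ioc hb.le
      linarith
  have : gcdf = fun b => gcdf 0 + ∫ x in (0:ℝ)..b, gpdf x := funext heq
  rw [this]
  exact continuous_const.add h

lemma gcdf_nonneg (x : ℝ) : 0 ≤ gcdf x :=
  setIntegral_nonneg measurableSet_Iic fun t _ => (gpdf_pos t).le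

lemma rank_le_of_count_le {Ω : Type*} (W : ℕ → Ω → ℝ) {n k i : ℕ} {ω : Ω} {t : ℝ}
    (hWi : t < W i ω)
    (hcount : ((Finset.range n).filter fun j => t < W j ω).card ≤ k) :
    rankIn W n i ω ≤ k := by
  refine le_trans (Finset.card_le_card ?_) hcount
  intro j hj
  simp only [Finset.mem_filter] at hj ⊢
  obtain ⟨hjn, hcase⟩ := hj
  refine ⟨hjn, ?_⟩
  rcases hcase with h | ⟨h, _⟩
  · linarith
  · rw [h]; exact hWi

lemma le_W_of_rank_le {Ω : Type*} (W : ℕ → Ω → ℝ) {n k i : ℕ} {ω : Ω} {t : ℝ}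
    (hi : i ∈ Finset.range n) (hr : rankIn W n i ω ≤ k)
    (hcount : k ≤ ((Finset.range n).filter fun j => t < W j ω).card) : t ≤ W i ω := by
  by_contra hlt
  push_neg at hlt
  have hsub : insert i ((Finset.range n).filter fun j => t < W j ω) ⊆
      (Finset.range n).filter (fun j => W i ω < W j ω ∨ (W j ω = W i ω ∧ j ≤ i)) := by
    intro j hj
    rcases Finset.mem_insert.1 hj with rfl | hj
    · exact Finset.mem_filter.2 ⟨hi, Or.inr ⟨rfl, le_rfl⟩⟩
    · simp only [Finset.mem_filter] at hj ⊢
      exact ⟨hj.1, Or.inl (lt_trans hlt hj.2)⟩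
  have hnot : i ∉ (Finset.range n).filter fun j => t < W j ω := by
    simp only [Finset.mem_filter, not_and]
    intro _; linarith
  have := Finset.card_le_card hsub
  rw [Finset.card_insert_of_notMem hnot] at this
  unfold rankIn at hr
  omega

lemma card_filter_and_not {s : Finset ℕ} (p q : ℕ → Prop) [DecidablePred p] [DecidablePred q] :
    (s.filter fun i => p i ∧ q i).card + (s.filter fun i => p i ∧ ¬ q i).card
      = (s.filter p).card := by
  have h1 : s.filter (fun i => p i ∧ q i) = (s.filter p).filter q :=
    (Finset.filter_congr fun i _ => Iff.rfl).trans (Finset.filter_filter p q s).symm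
  have h2 : s.filter (fun i => p i ∧ ¬ q i) = (s.filter p).filter (fun i => ¬ q i) :=
    (Finset.filter_congr fun i _ => Iff.rfl).trans (Finset.filter_filter p (fun i => ¬ q i) s).symm
  rw [h1, h2, Finset.card_filter_add_card_filter_not]

lemma card_filter_congr {s : Finset ℕ} {p q : ℕ → Prop} [DecidablePred p] [DecidablePred q]
    (h : ∀ i, p i ↔ q i) : (s.filter p).card = (s.filter q).card :=
  congrArg Finset.card (Finset.filter_congr fun i _ => h i)

lemma measSet_A_le (t : ℝ) : MeasurableSet {x : Bool × ℝ | x.1 = true ∧ x.2 ≤ t} := by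
  have : {x : Bool × ℝ | x.1 = true ∧ x.2 ≤ t}
      = (Prod.fst ⁻¹' {true}) ∩ (Prod.snd ⁻¹' Set.Iic t) := by
    ext x; simp [Set.mem_inter_iff]
  rw [this]
  exact (measurable_fst (measurableSet_singleton true)).inter
    (measurable_snd measurableSet_Iic)

lemma measSet_B_le (t : ℝ) : MeasurableSet {x : Bool × ℝ | x.1 = false ∧ x.2 ≤ t} := by
  have : {x : Bool × ℝ | x.1 = false ∧ x.2 ≤ t}
      = (Prod.fst ⁻¹' {false}) ∩ (Prod.snd ⁻¹' Set.Iic t) := by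
    ext x; simp [Set.mem_inter_iff]
  rw [this]
  exact (measurable_fst (measurableSet_singleton false)).inter
    (measurable_snd measurableSet_Iic)

lemma measSet_A : MeasurableSet {x : Bool × ℝ | x.1 = true} := by
  have : {x : Bool × ℝ | x.1 = true} = Prod.fst ⁻¹' {true} := by ext x; simp
  rw [this]; exact measurable_fst (measurableSet_singleton true)

lemma tendsto_floor_div (α : ℝ) (hα : 0 < α) :
    Tendsto (fun n : ℕ => (⌊α * n⌋₊ : ℝ) / n) atTop (nhds α) := by
  have hlow : Tendsto (fun n : ℕ => α - 1 / (n : ℝ)) atTop (nhds α) := by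
    have := tendsto_const_nhds (x := α) (f := atTop (α := ℕ))
    simpa using this.sub tendsto_one_div_atTop_nhds_zero_nat
  refine tendsto_of_tendsto_of_tendsto_of_le_of_le' hlow tendsto_const_nhds ?_ ?_
  · filter_upwards [eventually_ge_atTop 1] with n hn
    have hn0 : (0:ℝ) < n := by exact_mod_cast hn
    rw [sub_le_iff_le_add, ← add_div, le_div_iff₀ hn0]
    nlinarith [Nat.lt_floor_add_one (α * n)]
  · filter_upwards [eventually_ge_atTop 1] with n hn
    have hn0 : (0:ℝ) < n := by exact_mod_cast hn
    rw [div_le_iff₀ hn0]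
    exact Nat.floor_le (by positivity)

lemma lln_count {Ω : Type*} [MeasureSpace Ω]
    [IsProbabilityMeasure (volume : Measure Ω)]
    (G : ℕ → Ω → Bool) (W : ℕ → Ω → ℝ)
    (hmeas : ∀ i, Measurable (fun ω => (G i ω, W i ω)))
    (hident : ∀ i, Measure.map (fun ω => (G i ω, W i ω)) volume
        = Measure.map (fun ω => (G 0 ω, W 0 ω)) volume)
    (hindep : iIndepFun
        (fun i ω => (G i ω, W i ω)) volume)
    (p : Bool × ℝ → Prop) (hp : MeasurableSet {x | p x})
    (c : ℝ) (hc0 : 0 ≤ c)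
    (hc : volume {ω | p (G 0 ω, W 0 ω)} = ENNReal.ofReal c) :
    ∀ᵐ ω, Tendsto
      (fun n => (((Finset.range n).filter fun i => p (G i ω, W i ω)).card : ℝ) / n)
      atTop (nhds c) := by
  set f : Bool × ℝ → ℝ := fun x => if p x then 1 else 0 with hf
  have hfm : Measurable f := Measurable.ite hp measurable_const measurable_const
  set X : ℕ → Ω → ℝ := fun i ω => f (G i ω, W i ω) with hX
  have hS : MeasurableSet {ω | p (G 0 ω, W 0 ω)} := hmeas 0 hp
  have hXind : X 0 = Set.indicator {ω | p (G 0 ω, W 0 ω)} (fun _ => (1:ℝ)) := by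
    funext ω
    simp only [hX, hf, Set.indicator_apply, Set.mem_setOf_eq]
  have hint : Integrable (X 0) := by
    rw [hXind]; exact (integrable_const (1:ℝ)).indicator hS
  have hInd : Pairwise (Function.onFun (fun x1 x2 => IndepFun x1 x2 volume) X) := by
    intro i j hij
    exact (hindep.comp (fun _ => f) (fun _ => hfm)).indepFun hij
  have hId : ∀ i, IdentDistrib (X i) (X 0) := by
    intro i
    have base : IdentDistrib (fun ω => (G i ω, W i ω)) (fun ω => (G 0 ω, W 0 ω)) :=
      ⟨(hmeas i).aemeasurable, (hmeas 0).aemeasurable, hident i⟩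
    exact base.comp hfm
  have hmean : ∫ ω, X 0 ω = c := by
    rw [hXind, integral_indicator hS, setIntegral_const, Measure.real, hc, smul_eq_mul, mul_one,
      ENNReal.toReal_ofReal hc0]
  have h := strong_law_ae X hint hInd hId
  rw [hmean] at h
  filter_upwards [h] with ω hω
  refine hω.congr fun n => ?_
  rw [smul_eq_mul, ← Finset.sum_boole, inv_mul_eq_div]

end Aux

section AE
open MeasureTheory ProbabilityTheory Filter

set_option maxHeartbeats 2000000 in
lemma ae_sel {Ω : Type*} [MeasureTheory.MeasureSpace Ω]
    [MeasureTheory.IsProbabilityMeasure (MeasureTheory.volume : MeasureTheory.Measure Ω)]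
    (G : ℕ → Ω → Bool) (W : ℕ → Ω → ℝ)
    (pA α μA μB βA βB shA shB θ : ℝ)
    (hpA : pA ∈ Set.Ioo (0:ℝ) 1) (hα : α ∈ Set.Ioo (0:ℝ) 1)
    (hshA : 0 < shA) (hshB : 0 < shB)
    (hmeas : ∀ i, Measurable (fun ω => (G i ω, W i ω)))
    (hident : ∀ i, MeasureTheory.Measure.map (fun ω => (G i ω, W i ω)) MeasureTheory.volume
        = MeasureTheory.Measure.map (fun ω => (G 0 ω, W 0 ω)) MeasureTheory.volume)
    (hindep : ProbabilityTheory.iIndepFun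
        (fun i ω => (G i ω, W i ω)) MeasureTheory.volume)
    (hGA : ∀ i, MeasureTheory.volume {ω | G i ω = true} = ENNReal.ofReal pA)
    (hcondA : ∀ i x, MeasureTheory.volume {ω | G i ω = true ∧ W i ω ≤ x}
        = ENNReal.ofReal (pA * gcdf ((x - (μA - βA)) / shA)))
    (hcondB : ∀ i x, MeasureTheory.volume {ω | G i ω = false ∧ W i ω ≤ x}
        = ENNReal.ofReal ((1 - pA) * gcdf ((x - (μB - βB)) / shB)))
    (hθ : pA * (1 - gcdf ((θ - μA + βA) / shA))
        + (1 - pA) * (1 - gcdf ((θ - μB + βB) / shB)) = α) :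
    ∀ᵐ ω, Tendsto (fun n => selAFrac G W α n ω) atTop
      (nhds (1 - gcdf ((θ - μA + βA) / shA))) := by
  obtain ⟨hpA0, hpA1⟩ := hpA
  obtain ⟨hα0, hα1⟩ := hα
  set ΦA : ℝ → ℝ := fun t => gcdf ((t - (μA - βA)) / shA) with hΦA
  set ΦB : ℝ → ℝ := fun t => gcdf ((t - (μB - βB)) / shB) with hΦB
  have hgoalarg : (θ - μA + βA) / shA = (θ - (μA - βA)) / shA := by ring
  have hθ' : pA * (1 - ΦA θ) + (1 - pA) * (1 - ΦB θ) = α := by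
    rw [hΦA, hΦB]
    simpa only [hgoalarg, show (θ - μB + βB) / shB = (θ - (μB - βB)) / shB by ring] using hθ
  have hΦAlt : ∀ {a b : ℝ}, a < b → ΦA a < ΦA b := by
    intro a b hab
    exact gcdf_strictMono (by apply div_lt_div_of_pos_right (by linarith) hshA)
  have hΦBle : ∀ {a b : ℝ}, a ≤ b → ΦB a ≤ ΦB b := by
    intro a b hab
    exact gcdf_strictMono.monotone (by gcongr)
  -- a.e. laws of large numbers
  have hAae : ∀ᵐ ω, ∀ q : ℚ, Tendsto (fun n =>
      (((Finset.range n).filter fun i => G i ω = true ∧ W i ω ≤ θ + (q:ℝ)).card : ℝ) / n)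
      atTop (nhds (pA * ΦA (θ + (q:ℝ)))) := by
    rw [ae_all_iff]
    intro q
    have h := lln_count G W hmeas hident hindep
      (fun x => x.1 = true ∧ x.2 ≤ θ + (q:ℝ)) (measSet_A_le _)
      (pA * ΦA (θ + (q:ℝ))) (mul_nonneg hpA0.le (gcdf_nonneg _))
      (hcondA 0 (θ + (q:ℝ)))
    filter_upwards [h] with ω hω
    refine hω.congr fun n => ?_
    congr!
  have hBae : ∀ᵐ ω, ∀ q : ℚ, Tendsto (fun n =>
      (((Finset.range n).filter fun i => G i ω = false ∧ W i ω ≤ θ + (q:ℝ)).card : ℝ) / n)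
      atTop (nhds ((1 - pA) * ΦB (θ + (q:ℝ)))) := by
    rw [ae_all_iff]
    intro q
    have h := lln_count G W hmeas hident hindep
      (fun x => x.1 = false ∧ x.2 ≤ θ + (q:ℝ)) (measSet_B_le _)
      ((1 - pA) * ΦB (θ + (q:ℝ))) (mul_nonneg (by linarith) (gcdf_nonneg _))
      (hcondB 0 (θ + (q:ℝ)))
    filter_upwards [h] with ω hω
    refine hω.congr fun n => ?_
    congr!
  have hGae : ∀ᵐ ω : Ω, Tendsto (fun n =>
      (((Finset.range n).filter fun i => G i ω = true).card : ℝ) / n)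
      atTop (nhds pA) := by
    have h := lln_count G W hmeas hident hindep (fun x => x.1 = true) measSet_A pA hpA0.le (hGA 0)
    filter_upwards [h] with ω hω
    refine hω.congr fun n => ?_
    congr!
  filter_upwards [hAae, hBae, hGae] with ω hA hB hG
  -- counting identities at this ω
  have idA : ∀ (t : ℝ) (n : ℕ),
      ((Finset.range n).filter fun i => G i ω = true ∧ W i ω ≤ t).card
        + ((Finset.range n).filter fun i => G i ω = true ∧ t < W i ω).card
        = ((Finset.range n).filter fun i => G i ω = true).card := by
    intro t n
    have h := card_filter_and_not (s := Finset.range n)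
      (fun i => G i ω = true) (fun i => W i ω ≤ t)
    have e : ((Finset.range n).filter fun i => G i ω = true ∧ ¬ W i ω ≤ t).card
        = ((Finset.range n).filter fun i => G i ω = true ∧ t < W i ω).card :=
      card_filter_congr fun i => by rw [not_le]
    omega
  have idTot : ∀ (t : ℝ) (n : ℕ),
      ((Finset.range n).filter fun i => t < W i ω).card
        + ((Finset.range n).filter fun i => G i ω = true ∧ W i ω ≤ t).card
        + ((Finset.range n).filter fun i => G i ω = false ∧ W i ω ≤ t).card = n := by
    intro t n
    have h1 := card_filter_and_not (s := Finset.range n)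
      (fun i => W i ω ≤ t) (fun i => G i ω = true)
    have h2 := Finset.card_filter_add_card_filter_not (s := Finset.range n)
      (fun i => W i ω ≤ t)
    rw [Finset.card_range] at h2
    have e1 : ((Finset.range n).filter fun i => ¬ W i ω ≤ t).card
        = ((Finset.range n).filter fun i => t < W i ω).card :=
      card_filter_congr fun i => by rw [not_le]
    have e2 : ((Finset.range n).filter fun i => W i ω ≤ t ∧ G i ω = true).card
        = ((Finset.range n).filter fun i => G i ω = true ∧ W i ω ≤ t).card :=
      card_filter_congr fun i => and_comm
    have e3 : ((Finset.range n).filter fun i => W i ω ≤ t ∧ ¬ G i ω = true).card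
        = ((Finset.range n).filter fun i => G i ω = false ∧ W i ω ≤ t).card :=
      card_filter_congr fun i => by rw [Bool.not_eq_true, and_comm]
    omega
  -- limit for the count of large values
  have limM : ∀ q : ℚ, Tendsto (fun n =>
      (((Finset.range n).filter fun i => θ + (q:ℝ) < W i ω).card : ℝ) / n)
      atTop (nhds (1 - pA * ΦA (θ + (q:ℝ)) - (1 - pA) * ΦB (θ + (q:ℝ)))) := by
    intro q
    have heq : (fun n : ℕ => 1
        - (((Finset.range n).filter fun i => G i ω = true ∧ W i ω ≤ θ + (q:ℝ)).card : ℝ) / n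
        - (((Finset.range n).filter fun i => G i ω = false ∧ W i ω ≤ θ + (q:ℝ)).card : ℝ) / n)
        =ᶠ[atTop] (fun n =>
        (((Finset.range n).filter fun i => θ + (q:ℝ) < W i ω).card : ℝ) / n) := by
      filter_upwards [eventually_ge_atTop 1] with n hn
      have hn0 : (0:ℝ) < n := by exact_mod_cast hn
      have hid := idTot (θ + (q:ℝ)) n
      have hcast : (((Finset.range n).filter fun i => θ + (q:ℝ) < W i ω).card : ℝ)
          + (((Finset.range n).filter fun i => G i ω = true ∧ W i ω ≤ θ + (q:ℝ)).card : ℝ)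
          + (((Finset.range n).filter fun i => G i ω = false ∧ W i ω ≤ θ + (q:ℝ)).card : ℝ)
          = n := by exact_mod_cast hid
      field_simp
      linarith
    exact ((tendsto_const_nhds.sub (hA q)).sub (hB q)).congr' heq
  have limk := tendsto_floor_div α hα0
  -- eventually at least one A-candidate
  have e3 : ∀ᶠ n in atTop,
      1 ≤ ((Finset.range n).filter fun i => G i ω = true).card := by
    have hhalf : ∀ᶠ n in atTop, pA / 2 <
        (((Finset.range n).filter fun i => G i ω = true).card : ℝ) / n :=
      tendsto_const_nhds.eventually_lt hG (by linarith)
    filter_upwards [hhalf] with n hn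
    rcases Nat.eq_zero_or_pos ((Finset.range n).filter fun i => G i ω = true).card with h0 | h1
    · rw [h0] at hn; norm_num at hn; linarith
    · exact h1
  -- main argument at fixed ω
  have hxstar : (1 : ℝ) - gcdf ((θ - μA + βA) / shA) = 1 - ΦA θ := by rw [hΦA, hgoalarg]
  rw [hxstar, Metric.tendsto_nhds]
  intro ε hε
  have hcont : ContinuousAt ΦA θ := by
    have : Continuous ΦA :=
      gcdf_continuous.comp ((continuous_id.sub continuous_const).div_const shA)
    exact this.continuousAt
  obtain ⟨δ, hδ0, hδ⟩ := Metric.continuousAt_iff.1 hcont (ε/4) (by linarith)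
  obtain ⟨q, hq0, hq2⟩ := exists_rat_btwn (show (0:ℝ) < δ/2 by linarith)
  have hq0' : (0:ℝ) < (q:ℝ) := hq0
  have hcast0 : θ + ((-q : ℚ) : ℝ) = θ - (q:ℝ) := by push_cast; ring
  have hcast2 : θ + ((-(2*q) : ℚ) : ℝ) = θ - 2*(q:ℝ) := by push_cast; ring
  have hA1 := hA q
  have hA2 := hA (-(2*q))
  rw [hcast2] at hA2
  have hM1 := limM q
  have hM0 := limM (-q)
  rw [hcast0] at hM0
  have hd1 : dist (θ + (q:ℝ)) θ < δ := by
    rw [Real.dist_eq, show θ + (q:ℝ) - θ = (q:ℝ) by ring, abs_of_pos hq0']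
    linarith
  have hd2 : dist (θ - 2*(q:ℝ)) θ < δ := by
    rw [Real.dist_eq, show θ - 2*(q:ℝ) - θ = -(2*(q:ℝ)) by ring, abs_neg,
      abs_of_pos (by linarith)]
    linarith
  have hc1 : ΦA (θ + (q:ℝ)) < ΦA θ + ε/4 := by
    have h := hδ hd1
    rw [Real.dist_eq] at h
    have := abs_lt.1 h
    linarith [this.2]
  have hc2 : ΦA θ - ε/4 < ΦA (θ - 2*(q:ℝ)) := by
    have h := hδ hd2
    rw [Real.dist_eq] at h
    have := abs_lt.1 h
    linarith [this.1]
  have hmA1 : ΦA θ < ΦA (θ + (q:ℝ)) := hΦAlt (by linarith)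
  have hmB1 : ΦB θ ≤ ΦB (θ + (q:ℝ)) := hΦBle (by linarith)
  have hmA0 : ΦA (θ - (q:ℝ)) < ΦA θ := hΦAlt (by linarith)
  have hmB0 : ΦB (θ - (q:ℝ)) ≤ ΦB θ := hΦBle (by linarith)
  have hF1 : 1 - pA * ΦA (θ + (q:ℝ)) - (1 - pA) * ΦB (θ + (q:ℝ)) < α := by
    nlinarith [mul_pos hpA0 (sub_pos.2 hmA1),
      mul_nonneg (show (0:ℝ) ≤ 1 - pA by linarith) (sub_nonneg.2 hmB1), hθ']
  have hF0 : α < 1 - pA * ΦA (θ - (q:ℝ)) - (1 - pA) * ΦB (θ - (q:ℝ)) := by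
    nlinarith [mul_pos hpA0 (sub_pos.2 hmA0),
      mul_nonneg (show (0:ℝ) ≤ 1 - pA by linarith) (sub_nonneg.2 hmB0), hθ']
  have e1 : ∀ᶠ n : ℕ in atTop,
      ((Finset.range n).filter fun i => θ + (q:ℝ) < W i ω).card ≤ ⌊α * n⌋₊ := by
    filter_upwards [hM1.eventually_lt limk hF1, eventually_ge_atTop 1] with n h1 hn
    have hn0 : (0:ℝ) < n := by exact_mod_cast hn
    have h2 := (div_lt_div_iff₀ hn0 hn0).1 h1
    have h3 := lt_of_mul_lt_mul_right h2 hn0.le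
    exact_mod_cast h3.le
  have e2 : ∀ᶠ n : ℕ in atTop,
      ⌊α * n⌋₊ ≤ ((Finset.range n).filter fun i => θ - (q:ℝ) < W i ω).card := by
    filter_upwards [limk.eventually_lt hM0 hF0, eventually_ge_atTop 1] with n h1 hn
    have hn0 : (0:ℝ) < n := by exact_mod_cast hn
    have h2 := (div_lt_div_iff₀ hn0 hn0).1 h1
    have h3 := lt_of_mul_lt_mul_right h2 hn0.le
    exact_mod_cast h3.le
  have lower : ∀ n : ℕ,
      ((Finset.range n).filter fun i => θ + (q:ℝ) < W i ω).card ≤ ⌊α * n⌋₊ →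
      ((Finset.range n).filter fun i => G i ω = true).card
        ≤ ((Finset.range n).filter fun i => G i ω = true ∧ W i ω ≤ θ + (q:ℝ)).card
          + ((Finset.range n).filter fun i =>
              G i ω = true ∧ rankIn W n i ω ≤ ⌊α * n⌋₊).card := by
    intro n hcnt
    have hsub : ((Finset.range n).filter fun i => G i ω = true ∧ θ + (q:ℝ) < W i ω)
        ⊆ ((Finset.range n).filter fun i =>
            G i ω = true ∧ rankIn W n i ω ≤ ⌊α * n⌋₊) := by
      intro i hi
      simp only [Finset.mem_filter] at hi ⊢
      exact ⟨hi.1, hi.2.1, rank_le_of_count_le W hi.2.2 hcnt⟩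
    have hcard := Finset.card_le_card hsub
    have hid := idA (θ + (q:ℝ)) n
    omega
  have upper : ∀ n : ℕ,
      ⌊α * n⌋₊ ≤ ((Finset.range n).filter fun i => θ - (q:ℝ) < W i ω).card →
      ((Finset.range n).filter fun i =>
          G i ω = true ∧ rankIn W n i ω ≤ ⌊α * n⌋₊).card
        + ((Finset.range n).filter fun i => G i ω = true ∧ W i ω ≤ θ - 2*(q:ℝ)).card
        ≤ ((Finset.range n).filter fun i => G i ω = true).card := by
    intro n hcnt
    have hdisj : Disjoint
        ((Finset.range n).filter fun i => G i ω = true ∧ rankIn W n i ω ≤ ⌊α * n⌋₊)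
        ((Finset.range n).filter fun i => G i ω = true ∧ W i ω ≤ θ - 2*(q:ℝ)) := by
      rw [Finset.disjoint_left]
      intro i hi hi2
      simp only [Finset.mem_filter] at hi hi2
      have hWi := le_W_of_rank_le W hi.1 hi.2.2 hcnt
      linarith [hi2.2.2]
    have hsub : (((Finset.range n).filter fun i =>
          G i ω = true ∧ rankIn W n i ω ≤ ⌊α * n⌋₊)
        ∪ ((Finset.range n).filter fun i => G i ω = true ∧ W i ω ≤ θ - 2*(q:ℝ)))
        ⊆ ((Finset.range n).filter fun i => G i ω = true) := by
      intro i hi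
      rcases Finset.mem_union.1 hi with h | h <;>
        (simp only [Finset.mem_filter] at h ⊢; exact ⟨h.1, h.2.1⟩)
    have hcard := Finset.card_le_card hsub
    rw [Finset.card_union_of_disjoint hdisj] at hcard
    exact hcard
  have hu : Tendsto (fun n : ℕ =>
      ((((Finset.range n).filter fun i => G i ω = true).card : ℝ)
        - (((Finset.range n).filter fun i =>
            G i ω = true ∧ W i ω ≤ θ + (q:ℝ)).card : ℝ))
      / max 1 (((Finset.range n).filter fun i => G i ω = true).card : ℝ))
      atTop (nhds (1 - ΦA (θ + (q:ℝ)))) := by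
    have hdivlim : Tendsto (fun n : ℕ =>
        ((((Finset.range n).filter fun i => G i ω = true).card : ℝ)/n
          - (((Finset.range n).filter fun i =>
              G i ω = true ∧ W i ω ≤ θ + (q:ℝ)).card : ℝ)/n)
        / ((((Finset.range n).filter fun i => G i ω = true).card : ℝ)/n))
        atTop (nhds ((pA - pA * ΦA (θ + (q:ℝ))) / pA)) :=
      (hG.sub hA1).div hG (ne_of_gt hpA0)
    have hval : (pA - pA * ΦA (θ + (q:ℝ))) / pA = 1 - ΦA (θ + (q:ℝ)) := by
      field_simp
    rw [hval] at hdivlim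
    refine hdivlim.congr' ?_
    filter_upwards [e3, eventually_ge_atTop 1] with n hNA hn
    have hn0 : (0:ℝ) < n := by exact_mod_cast hn
    have hNA0 : (0:ℝ) < ((Finset.range n).filter fun i => G i ω = true).card := by
      exact_mod_cast hNA
    have hmax : max 1 (((Finset.range n).filter fun i => G i ω = true).card : ℝ)
        = (((Finset.range n).filter fun i => G i ω = true).card : ℝ) :=
      max_eq_right (by exact_mod_cast hNA)
    rw [hmax]
    have hne : ((n:ℝ)) ≠ 0 := ne_of_gt hn0
    have hane : (((Finset.range n).filter fun i => G i ω = true).card : ℝ) ≠ 0 :=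
      ne_of_gt hNA0
    field_simp
  have hv : Tendsto (fun n : ℕ =>
      ((((Finset.range n).filter fun i => G i ω = true).card : ℝ)
        - (((Finset.range n).filter fun i =>
            G i ω = true ∧ W i ω ≤ θ - 2*(q:ℝ)).card : ℝ))
      / max 1 (((Finset.range n).filter fun i => G i ω = true).card : ℝ))
      atTop (nhds (1 - ΦA (θ - 2*(q:ℝ)))) := by
    have hdivlim : Tendsto (fun n : ℕ =>
        ((((Finset.range n).filter fun i => G i ω = true).card : ℝ)/n
          - (((Finset.range n).filter fun i =>
              G i ω = true ∧ W i ω ≤ θ - 2*(q:ℝ)).card : ℝ)/n)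
        / ((((Finset.range n).filter fun i => G i ω = true).card : ℝ)/n))
        atTop (nhds ((pA - pA * ΦA (θ - 2*(q:ℝ))) / pA)) :=
      (hG.sub hA2).div hG (ne_of_gt hpA0)
    have hval : (pA - pA * ΦA (θ - 2*(q:ℝ))) / pA = 1 - ΦA (θ - 2*(q:ℝ)) := by
      field_simp
    rw [hval] at hdivlim
    refine hdivlim.congr' ?_
    filter_upwards [e3, eventually_ge_atTop 1] with n hNA hn
    have hn0 : (0:ℝ) < n := by exact_mod_cast hn
    have hNA0 : (0:ℝ) < ((Finset.range n).filter fun i => G i ω = true).card := by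
      exact_mod_cast hNA
    have hmax : max 1 (((Finset.range n).filter fun i => G i ω = true).card : ℝ)
        = (((Finset.range n).filter fun i => G i ω = true).card : ℝ) :=
      max_eq_right (by exact_mod_cast hNA)
    rw [hmax]
    have hne : ((n:ℝ)) ≠ 0 := ne_of_gt hn0
    have hane : (((Finset.range n).filter fun i => G i ω = true).card : ℝ) ≠ 0 :=
      ne_of_gt hNA0
    field_simp
  have e4 := hu.eventually (eventually_gt_nhds
    (show 1 - ΦA (θ + (q:ℝ)) - ε/2 < 1 - ΦA (θ + (q:ℝ)) by linarith))
  have e5 := hv.eventually (eventually_lt_nhds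
    (show 1 - ΦA (θ - 2*(q:ℝ)) < 1 - ΦA (θ - 2*(q:ℝ)) + ε/2 by linarith))
  filter_upwards [e1, e2, e4, e5] with n h1 h2 h4 h5
  have hl := lower n h1
  have hup := upper n h2
  have hden : (0:ℝ) < max 1 (((Finset.range n).filter fun i => G i ω = true).card : ℝ) :=
    lt_of_lt_of_le one_pos (le_max_left _ _)
  have hlr : (((Finset.range n).filter fun i => G i ω = true).card : ℝ)
      - (((Finset.range n).filter fun i => G i ω = true ∧ W i ω ≤ θ + (q:ℝ)).card : ℝ)
      ≤ (((Finset.range n).filter fun i =>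
          G i ω = true ∧ rankIn W n i ω ≤ ⌊α * n⌋₊).card : ℝ) := by
    have := (Nat.cast_le (α := ℝ)).2 hl
    push_cast at this
    linarith
  have hur : (((Finset.range n).filter fun i =>
        G i ω = true ∧ rankIn W n i ω ≤ ⌊α * n⌋₊).card : ℝ)
      ≤ (((Finset.range n).filter fun i => G i ω = true).card : ℝ)
        - (((Finset.range n).filter fun i =>
            G i ω = true ∧ W i ω ≤ θ - 2*(q:ℝ)).card : ℝ) := by
    have := (Nat.cast_le (α := ℝ)).2 hup
    push_cast at this
    linarith
  have hself : selAFrac G W α n ω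
      = (((Finset.range n).filter fun i =>
          G i ω = true ∧ rankIn W n i ω ≤ ⌊α * n⌋₊).card : ℝ)
        / max 1 (((Finset.range n).filter fun i => G i ω = true).card : ℝ) := rfl
  rw [Real.dist_eq, hself, abs_lt]
  have h6 : (((Finset.range n).filter fun i => G i ω = true).card : ℝ)
        - (((Finset.range n).filter fun i =>
            G i ω = true ∧ W i ω ≤ θ + (q:ℝ)).card : ℝ)
      ≤ (((Finset.range n).filter fun i =>
          G i ω = true ∧ rankIn W n i ω ≤ ⌊α * n⌋₊).card : ℝ) := hlr
  have hq1 : ((((Finset.range n).filter fun i => G i ω = true).card : ℝ)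
        - (((Finset.range n).filter fun i =>
            G i ω = true ∧ W i ω ≤ θ + (q:ℝ)).card : ℝ))
      / max 1 (((Finset.range n).filter fun i => G i ω = true).card : ℝ)
      ≤ (((Finset.range n).filter fun i =>
          G i ω = true ∧ rankIn W n i ω ≤ ⌊α * n⌋₊).card : ℝ)
      / max 1 (((Finset.range n).filter fun i => G i ω = true).card : ℝ) := by gcongr
  have hq2' : (((Finset.range n).filter fun i =>
          G i ω = true ∧ rankIn W n i ω ≤ ⌊α * n⌋₊).card : ℝ)
      / max 1 (((Finset.range n).filter fun i => G i ω = true).card : ℝ)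
      ≤ ((((Finset.range n).filter fun i => G i ω = true).card : ℝ)
        - (((Finset.range n).filter fun i =>
            G i ω = true ∧ W i ω ≤ θ - 2*(q:ℝ)).card : ℝ))
      / max 1 (((Finset.range n).filter fun i => G i ω = true).card : ℝ) := by gcongr
  constructor
  · linarith [h4, hq1, hc1]
  · linarith [h5, hq2', hc2]
end AE

/-- law of large numbers for the group-oblivious selection — the
fraction of selected `A`-candidates converges in probability to the deterministic
limit `x^obl = 1 − Φ((θ − μ_A + β_A)/σ̂_A)`. -/
theorem stmt15 {Ω : Type*} [MeasureTheory.MeasureSpace Ω]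
    [MeasureTheory.IsProbabilityMeasure (MeasureTheory.volume : MeasureTheory.Measure Ω)]
    (G : ℕ → Ω → Bool) (W : ℕ → Ω → ℝ)
    (pA α μA μB βA βB shA shB θ : ℝ)
    (hpA : pA ∈ Set.Ioo (0:ℝ) 1) (hα : α ∈ Set.Ioo (0:ℝ) 1)
    (hshA : 0 < shA) (hshB : 0 < shB)
    (hmeas : ∀ i, Measurable (fun ω => (G i ω, W i ω)))
    (hident : ∀ i, MeasureTheory.Measure.map (fun ω => (G i ω, W i ω)) MeasureTheory.volume
        = MeasureTheory.Measure.map (fun ω => (G 0 ω, W 0 ω)) MeasureTheory.volume)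
    (hindep : ProbabilityTheory.iIndepFun
        (fun i ω => (G i ω, W i ω)) MeasureTheory.volume)
    (hGA : ∀ i, MeasureTheory.volume {ω | G i ω = true} = ENNReal.ofReal pA)
    (hcondA : ∀ i x, MeasureTheory.volume {ω | G i ω = true ∧ W i ω ≤ x}
        = ENNReal.ofReal (pA * gcdf ((x - (μA - βA)) / shA)))
    (hcondB : ∀ i x, MeasureTheory.volume {ω | G i ω = false ∧ W i ω ≤ x}
        = ENNReal.ofReal ((1 - pA) * gcdf ((x - (μB - βB)) / shB)))
    (hθ : pA * (1 - gcdf ((θ - μA + βA) / shA))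
        + (1 - pA) * (1 - gcdf ((θ - μB + βB) / shB)) = α) :
    ∀ ε > (0:ℝ),
      Filter.Tendsto
        (fun n => MeasureTheory.volume
          {ω | ε ≤ |selAFrac G W α n ω - (1 - gcdf ((θ - μA + βA) / shA))|})
        Filter.atTop (nhds 0) := by
  have hae := ae_sel G W pA α μA μB βA βB shA shB θ hpA hα hshA hshB hmeas hident hindep
    hGA hcondA hcondB hθ
  have hWm : ∀ i, Measurable (W i) := fun i => measurable_snd.comp (hmeas i)
  have hGm : ∀ i, Measurable (G i) := fun i => measurable_fst.comp (hmeas i)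
  have hrank : ∀ n i, Measurable fun ω => rankIn W n i ω := by
    intro n i
    have hrw : (fun ω => rankIn W n i ω) = fun ω => ∑ j ∈ Finset.range n,
        if (W i ω < W j ω ∨ (W j ω = W i ω ∧ j ≤ i)) then 1 else 0 := by
      funext ω
      rw [rankIn, Finset.card_filter]
    rw [hrw]
    refine Finset.measurable_sum _ fun j _ => Measurable.ite ?_ measurable_const measurable_const
    by_cases h : j ≤ i
    · simp only [h, and_true]
      rw [Set.setOf_or]
      exact (measurableSet_lt (hWm i) (hWm j)).union (measurableSet_eq_fun (hWm j) (hWm i))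
    · simp only [h, and_false, or_false]
      exact measurableSet_lt (hWm i) (hWm j)
  have hselmeas : ∀ n, Measurable fun ω => selAFrac G W α n ω := by
    intro n
    have hnum : Measurable fun ω => (((Finset.range n).filter fun i =>
        G i ω = true ∧ rankIn W n i ω ≤ ⌊α * n⌋₊).card : ℝ) := by
      have hrw : (fun ω => (((Finset.range n).filter fun i =>
          G i ω = true ∧ rankIn W n i ω ≤ ⌊α * n⌋₊).card : ℝ))
          = fun ω => ∑ i ∈ Finset.range n,
            if (G i ω = true ∧ rankIn W n i ω ≤ ⌊α * n⌋₊) then (1:ℝ) else 0 := by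
        funext ω; rw [Finset.sum_boole]
      rw [hrw]
      refine Finset.measurable_sum _ fun i _ =>
        Measurable.ite ?_ measurable_const measurable_const
      rw [Set.setOf_and]
      exact ((hGm i) (show MeasurableSet {x : Bool | x = true} from trivial)).inter ((hrank n i) (show MeasurableSet {m : ℕ | m ≤ ⌊α * n⌋₊} from trivial))
    have hden : Measurable fun ω =>
        max 1 (((Finset.range n).filter fun i => G i ω = true).card : ℝ) := by
      have hcard : Measurable fun ω =>
          (((Finset.range n).filter fun i => G i ω = true).card : ℝ) := by
        have hrw : (fun ω => (((Finset.range n).filter fun i => G i ω = true).card : ℝ))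
            = fun ω => ∑ i ∈ Finset.range n, if (G i ω = true) then (1:ℝ) else 0 := by
          funext ω; rw [Finset.sum_boole]
        rw [hrw]
        exact Finset.measurable_sum _ fun i _ =>
          Measurable.ite ((hGm i) (show MeasurableSet {x : Bool | x = true} from trivial)) measurable_const measurable_const
      exact measurable_const.max hcard
    exact hnum.div hden
  intro ε hε
  have h := MeasureTheory.tendstoInMeasure_of_tendsto_ae
    (fun n => (hselmeas n).aestronglyMeasurable) hae
  have h2 := (MeasureTheory.tendstoInMeasure_iff_dist.1 h) ε hε
  simpa only [Real.dist_eq] using h2
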